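/- If C is a 2p×2p Hermitian matrix with C j C = j, where j = diag(I_p, -I_p), and ε is a complex scalar with |ε| < 1, then C + ε j is invertible, provided C is positive definite. -/

import Mathlib

open Matrix
open scoped ComplexOrder

theorem stmt1 (p : ℕ) (hp : 1 ≤ p)
    (C : Matrix (Fin p ⊕ Fin p) (Fin p ⊕ Fin p) ℂ)
    (j : Matrix (Fin p ⊕ Fin p) (Fin p ⊕ Fin p) ℂ)
    (hj : j = Matrix.fromBlocks 1 0 0 (-1))
    (hC : C.IsHermitian) (hCjC : C * j * C = j) (hpos : C.PosDef)
    (ε : ℂ) (hε : ‖ε‖ < 1) :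
    IsUnit (C + ε • j) := by
  have hj2 : j * j = 1 := by
    subst hj
    simp [Matrix.fromBlocks_multiply, ← Matrix.fromBlocks_one]
  set M := j * C with hM
  have hM2 : M * M = 1 := by
    have : j * C * (j * C) = j * (C * j * C) := by
      simp only [mul_assoc]
    rw [hM, this, hCjC, hj2]
  have hfac : C + ε • j = C * (1 + ε • M) := by
    rw [mul_add, mul_one, Matrix.mul_smul, hM, ← mul_assoc, hCjC]
  rw [hfac]
  refine hpos.isUnit.mul ?_
  have hne : (1 - ε ^ 2) ≠ 0 := by
    intro h
    have h1 : ε ^ 2 = 1 := by linear_combination -h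
    have : ‖ε‖ ^ 2 = 1 := by
      rw [← norm_pow, h1, norm_one]
    nlinarith [norm_nonneg ε]
  have hmul : (1 + ε • M) * ((1 - ε ^ 2)⁻¹ • (1 - ε • M)) = 1 := ?_
  · exact ⟨⟨_, _, hmul, mul_eq_one_comm.mp hmul⟩, rfl⟩
  rw [Matrix.mul_smul]
  have hprod : (1 + ε • M) * (1 - ε • M) = (1 - ε ^ 2) • (1 : Matrix (Fin p ⊕ Fin p) (Fin p ⊕ Fin p) ℂ) := by
    rw [add_mul, one_mul, mul_sub, mul_one, Matrix.smul_mul, Matrix.mul_smul, hM2]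
    module
  rw [hprod, smul_smul, inv_mul_cancel₀ hne, one_smul]
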